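/- For n = 2 and n = 3, and for every integer k ≥ 1, one has n · ∑_{m=0}^{k-1} 1/(2m+n) ≤ √(k(k+n-1)/n). -/

import Mathlib

open Finset

lemma sqrt_step_aux (c k : ℝ) (hc : 2 ≤ c) (hc3 : c ≤ 3) (hk : 1 ≤ k) :
    Real.sqrt (k*(k+c-1)/c) + c/(2*k+c) ≤ Real.sqrt ((k+1)*(k+c)/c) := by
  have hcpos : (0:ℝ) < c := by linarith
  have hd : (0:ℝ) < 2*k+c := by linarith
  have hk0 : (0:ℝ) ≤ k := by linarith
  set a := Real.sqrt (k*(k+c-1)/c) with hadef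
  have ha0 : 0 ≤ a := Real.sqrt_nonneg _
  have ha2 : a^2 = k*(k+c-1)/c := Real.sq_sqrt (by
    apply div_nonneg _ (le_of_lt hcpos); nlinarith)
  have ha2' : c * a^2 = k*(k+c-1) := by rw [ha2]; field_simp
  have hL : 0 ≤ 2*c^2*(2*k+c)*a := by positivity
  have hR : 0 ≤ (2*k+c)^3 - c^3 := by
    nlinarith [pow_le_pow_left₀ (le_of_lt hcpos) (by linarith : c ≤ 2*k+c) 3]
  have hsq : (2*c^2*(2*k+c)*a)^2 ≤ ((2*k+c)^3 - c^3)^2 := by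
    have base : 4*c^3*(2*k+c)^2*(k*(k+c-1)) ≤ ((2*k+c)^3 - c^3)^2 := by
      have e1 : (2*k+c)^3 - c^3 = 2*k*((2*k+c)^2+(2*k+c)*c+c^2) := by ring
      rw [e1]
      have hX2 : 9*c^2*(2*k+c)^2 ≤ ((2*k+c)^2+(2*k+c)*c+c^2)^2 := by
        nlinarith [mul_nonneg (mul_nonneg (le_of_lt hcpos) (le_of_lt hd)) (sq_nonneg k),
          sq_nonneg (k^2)]
      have h9 : 0 ≤ 9*k - c*(k+c-1) := by nlinarith
      have h4 : 0 ≤ 4*k*c^2*(2*k+c)^2 * (9*k - c*(k+c-1)) := mul_nonneg (by positivity) h9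
      have h5 : 4*k^2*(9*c^2*(2*k+c)^2) ≤ 4*k^2*((2*k+c)^2+(2*k+c)*c+c^2)^2 :=
        mul_le_mul_of_nonneg_left hX2 (by positivity)
      nlinarith [h4, h5]
    calc (2*c^2*(2*k+c)*a)^2 = 4*c^3*(2*k+c)^2*(c*a^2) := by ring
    _ = 4*c^3*(2*k+c)^2*(k*(k+c-1)) := by rw [ha2']
    _ ≤ ((2*k+c)^3 - c^3)^2 := base
  have key : 2*c^2*(2*k+c)*a ≤ (2*k+c)^3 - c^3 := by
    calc 2*c^2*(2*k+c)*a = Real.sqrt ((2*c^2*(2*k+c)*a)^2) := (Real.sqrt_sq hL).symm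
    _ ≤ Real.sqrt (((2*k+c)^3 - c^3)^2) := Real.sqrt_le_sqrt hsq
    _ = (2*k+c)^3 - c^3 := Real.sqrt_sq hR
  rw [Real.le_sqrt (by positivity)]
  rw [show (a + c/(2*k+c))^2 = ((a*(2*k+c) + c)^2)/(2*k+c)^2 by field_simp,
    div_le_div_iff₀ (by positivity) hcpos]
  · have h3 : (2*k+c)^2 * (c*a^2) = (2*k+c)^2 * (k*(k+c-1)) := by rw [ha2']
    nlinarith [key, h3]
  · exact div_nonneg (by nlinarith) (le_of_lt hcpos)

lemma main_aux (c : ℝ) (hc : 2 ≤ c) (hc3 : c ≤ 3) (k : ℕ) (hk : 1 ≤ k) :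
    c * ∑ m ∈ Finset.range k, (1:ℝ)/(2*m+c) ≤ Real.sqrt ((k*(k+c-1))/c) := by
  have hcpos : (0:ℝ) < c := by linarith
  induction k, hk using Nat.le_induction with
  | base =>
    simp only [Finset.sum_range_one, Nat.cast_zero, Nat.cast_one]
    rw [show ((1:ℝ)*(1+c-1))/c = 1 by field_simp; ring]
    rw [Real.sqrt_one]
    rw [mul_zero, zero_add, mul_one_div, div_self (ne_of_gt hcpos)]
  | succ k hk ih =>
    rw [Finset.sum_range_succ, mul_add]
    have hkr : (1:ℝ) ≤ (k:ℝ) := by exact_mod_cast hk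
    have step := sqrt_step_aux c (k:ℝ) hc hc3 hkr
    have hd : (0:ℝ) < 2*k+c := by linarith
    calc c * ∑ m ∈ Finset.range k, (1:ℝ)/(2*m+c) + c * (1/(2*k+c))
        ≤ Real.sqrt ((k*(k+c-1))/c) + c/(2*k+c) := by
          rw [mul_one_div]; exact add_le_add ih le_rfl
    _ ≤ Real.sqrt (((k:ℝ)+1)*((k:ℝ)+c)/c) := step
    _ = Real.sqrt (((k+1:ℕ):ℝ)*(((k+1:ℕ):ℝ)+c-1)/c) := by push_cast; ring_nf
  
theorem stmt_0 (n : ℕ) (hn : n = 2 ∨ n = 3) (k : ℕ) (hk : 1 ≤ k) :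
    (n : ℝ) * ∑ m ∈ Finset.range k, (1 : ℝ) / (2 * m + n) ≤
      Real.sqrt ((k * (k + n - 1)) / n) := by
  rcases hn with rfl | rfl
  · have := main_aux 2 (by norm_num) (by norm_num) k hk
    norm_num at this ⊢
    convert this using 3 <;> norm_num
  · have := main_aux 3 (by norm_num) (by norm_num) k hk
    norm_num at this ⊢
    convert this using 3 <;> norm_num
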